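/- Let R = ℝ[P₄,…,P_{2n-4}, E] and S = ℝ[u, P'₄,…,P'_{2n-8}, E'] be polynomial rings (graded, with deg u = 2), and let φ : R → S_u = S[u^{-1}] be the graded ring map φ(E) = uE', φ(P_{2n-4}) = u²P'_{2n-8} + E'², φ(P_j) = u²P'_{j-4} + P'_j for 4 ≤ j ≤ 2n−8 (with P'₀ := 1). Then φ is injective. -/

import Mathlib

/-!
STATEMENT 14: Let `R = ℝ[P₄, …, P_{2n-4}, E]` and `S = ℝ[u, P'₄, …, P'_{2n-8}, E']` be graded
polynomial rings (`deg u = 2`), and let `φ : R → S_u = S[u⁻¹]` be the graded ring map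
`φ(E) = u·E'`, `φ(P_{2n-4}) = u²·P'_{2n-8} + E'²`, and `φ(P_j) = u²·P'_{j-4} + P'_j` for
`4 ≤ j ≤ 2n-8` (with `P'₀ := 1`).  Then `φ` is injective.

We write `m` for the number of Pontryagin generators of the source (`P₄, …, P_{4m}` with
`4m = 2n - 4`), so the source is the polynomial ring on `Fin m ⊕ Unit` (`inl i ↦ P_{4(i+1)}`,
`inr () ↦ E`), and the target `S[u⁻¹]` is the ring of Laurent polynomials in `u` over the
polynomial ring on `Fin (m-1) ⊕ Unit` (`inl i ↦ P'_{4(i+1)}`, `inr () ↦ E'`); `u = T 1`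
and `u² = T 2` in Laurent polynomial notation.  We assume `m ≥ 2` (i.e. `n ≥ 6`, so that
`P'_{2n-8}` exists, as in the statement).
-/

open MvPolynomial LaurentPolynomial

/-- The restriction map `H(BSO(n)) → H(B(SO(2)×SO(n-2)))[u⁻¹]` for `n` even. -/
noncomputable def evenRestriction (m : ℕ) (hm : 2 ≤ m) :
    MvPolynomial (Fin m ⊕ Unit) ℝ →ₐ[ℝ]
      LaurentPolynomial (MvPolynomial (Fin (m - 1) ⊕ Unit) ℝ) :=
  MvPolynomial.aeval (fun v : Fin m ⊕ Unit =>
    match v with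
    | Sum.inr _ =>
        -- E ↦ u·E'
        T 1 * LaurentPolynomial.C (X (Sum.inr ()))
    | Sum.inl i =>
        if h : (i : ℕ) = m - 1 then
          -- top class: P_{2n-4} ↦ u²·P'_{2n-8} + E'²
          T 2 * LaurentPolynomial.C (X (Sum.inl (⟨m - 2, by omega⟩ : Fin (m - 1)))) +
            (LaurentPolynomial.C (X (Sum.inr ()))) ^ 2
        else
          -- P_{4(i+1)} ↦ u²·P'_{4i} + P'_{4(i+1)}, with P'₀ = 1
          T 2 * (if h0 : (i : ℕ) = 0 then 1
                 else LaurentPolynomial.C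
                   (X (Sum.inl (⟨(i : ℕ) - 1, by have := i.isLt; omega⟩ : Fin (m - 1))))) +
            LaurentPolynomial.C
              (X (Sum.inl (⟨(i : ℕ), by have := i.isLt; omega⟩ : Fin (m - 1)))))

noncomputable section Stmt14Aux

namespace Stmt14

/-- Recursive family of polynomials: `D 0 = 1`, `D (i+1) = C (x i) - X * D i`. -/
def Dp {F : Type*} [Field F] (x : ℕ → F) : ℕ → Polynomial F
  | 0 => 1
  | (i + 1) => Polynomial.C (x i) - Polynomial.X * Dp x i

lemma Dp_natDegree {F : Type*} [Field F] (x : ℕ → F) (i : ℕ) :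
    (Dp x i).natDegree = i ∧ Dp x i ≠ 0 := by
  induction i with
  | zero => simp [Dp]
  | succ i ih =>
    obtain ⟨hd, hne⟩ := ih
    have hX : (Polynomial.X * Dp x i).natDegree = i + 1 := by
      rw [Polynomial.natDegree_mul Polynomial.X_ne_zero hne, Polynomial.natDegree_X, hd]
      omega
    have hlt : (Polynomial.C (x i)).natDegree < (-(Polynomial.X * Dp x i)).natDegree := by
      rw [Polynomial.natDegree_neg, hX, Polynomial.natDegree_C]; omega
    have hdeg : (Dp x (i + 1)).natDegree = i + 1 := by
      show (Polynomial.C (x i) - Polynomial.X * Dp x i).natDegree = i + 1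
      rw [sub_eq_add_neg, Polynomial.natDegree_add_eq_right_of_natDegree_lt hlt,
        Polynomial.natDegree_neg, hX]
    refine ⟨hdeg, fun h0 => ?_⟩
    rw [h0, Polynomial.natDegree_zero] at hdeg
    omega

lemma Dp_eval_succ {F : Type*} [Field F] (x : ℕ → F) (i : ℕ) (s : F) :
    (Dp x (i + 1)).eval s = x i - s * (Dp x i).eval s := by
  simp [Dp]

abbrev Rg (m : ℕ) : Type := MvPolynomial (Fin m ⊕ Unit) ℝ
abbrev Sg (m : ℕ) : Type := MvPolynomial (Fin (m - 1) ⊕ Unit) ℝ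
abbrev Lg (m : ℕ) : Type := AlgebraicClosure (FractionRing (Rg m))

def ι (m : ℕ) : Rg m →ₐ[ℝ] Lg m := IsScalarTower.toAlgHom ℝ (Rg m) (Lg m)

lemma ι_inj (m : ℕ) : Function.Injective (ι m) := by
  have h1 : Function.Injective (algebraMap (Rg m) (FractionRing (Rg m))) :=
    IsFractionRing.injective _ _
  have h2 : Function.Injective (algebraMap (FractionRing (Rg m)) (Lg m)) :=
    (algebraMap (FractionRing (Rg m)) (Lg m)).injective
  have heq : (ι m : Rg m → Lg m) =
      (algebraMap (FractionRing (Rg m)) (Lg m)) ∘ (algebraMap (Rg m) (FractionRing (Rg m))) := by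
    funext x
    simp [ι, ← IsScalarTower.algebraMap_apply]
  rw [heq]
  exact h2.comp h1

/-- Images of the Pontryagin variables of the source. -/
def xg (m : ℕ) (i : ℕ) : Lg m :=
  if h : i < m then ι m (X (Sum.inl ⟨i, h⟩)) else 0

/-- Image of the Euler variable of the source. -/
def eg (m : ℕ) : Lg m := ι m (X (Sum.inr ()))

lemma eg_ne (m : ℕ) : eg m ≠ 0 := by
  intro h
  have := ι_inj m (a₁ := X (Sum.inr ())) (a₂ := 0) (by simpa [eg] using h)
  exact MvPolynomial.X_ne_zero _ this

/-- The polynomial whose root provides the value of `u²`. -/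
def Fpoly (m : ℕ) : Polynomial (Lg m) :=
  Polynomial.X ^ 2 * Dp (xg m) (m - 1) +
    (Polynomial.C (eg m ^ 2) - Polynomial.C (xg m (m - 1)) * Polynomial.X)

lemma Fpoly_natDegree (m : ℕ) (hm : 2 ≤ m) : (Fpoly m).natDegree = m + 1 := by
  obtain ⟨hd, hne⟩ := Dp_natDegree (xg m) (m - 1)
  have hA : (Polynomial.X ^ 2 * Dp (xg m) (m - 1)).natDegree = m + 1 := by
    rw [Polynomial.natDegree_mul (pow_ne_zero _ Polynomial.X_ne_zero) hne, Polynomial.natDegree_X_pow, hd]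
    omega
  have hB : (Polynomial.C (eg m ^ 2) - Polynomial.C (xg m (m - 1)) * Polynomial.X).natDegree ≤ 1 := by
    refine le_trans (Polynomial.natDegree_sub_le _ _) ?_
    simp only [Polynomial.natDegree_C]
    refine max_le (by omega) ?_
    refine le_trans (Polynomial.natDegree_mul_le) ?_
    simp [Polynomial.natDegree_C, Polynomial.natDegree_X]
  rw [Fpoly, Polynomial.natDegree_add_eq_left_of_natDegree_lt (by omega), hA]


/-- Specialisation of the target coefficient ring. -/
def gS (m : ℕ) (s : Lg m) (t : (Lg m)ˣ) : Sg m →ₐ[ℝ] Lg m :=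
  MvPolynomial.aeval (fun v : Fin (m - 1) ⊕ Unit =>
    match v with
    | Sum.inl i => (Dp (xg m) ((i : ℕ) + 1)).eval s
    | Sum.inr _ => eg m * ((t⁻¹ : (Lg m)ˣ) : Lg m))

/-- The evaluation of Laurent polynomials: `u ↦ t`, coefficients via `gS`. -/
def θ (m : ℕ) (s : Lg m) (t : (Lg m)ˣ) : LaurentPolynomial (Sg m) →ₐ[ℝ] Lg m :=
  AddMonoidAlgebra.liftNCAlgHom (gS m s t)
    ((Units.coeHom (Lg m)).comp (zpowersHom (Lg m)ˣ t)) (fun _ _ => Commute.all _ _)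

lemma θ_single (m : ℕ) (s : Lg m) (t : (Lg m)ˣ) (n : ℤ) (p : Sg m) :
    θ m s t (AddMonoidAlgebra.single n p) = gS m s t p * ((t ^ n : (Lg m)ˣ) : Lg m) := by
  have h : θ m s t (AddMonoidAlgebra.single n p) =
      AddMonoidAlgebra.liftNC ((gS m s t : Sg m →+* Lg m) : Sg m →+ Lg m)
        ((Units.coeHom (Lg m)).comp (zpowersHom (Lg m)ˣ t)) (AddMonoidAlgebra.single n p) := rfl
  rw [h, AddMonoidAlgebra.liftNC_single]
  simp [zpowersHom_apply]

lemma θ_C (m : ℕ) (s : Lg m) (t : (Lg m)ˣ) (p : Sg m) :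
    θ m s t (LaurentPolynomial.C p) = gS m s t p := by
  have : LaurentPolynomial.C p = (AddMonoidAlgebra.single (0 : ℤ) p : LaurentPolynomial (Sg m)) := rfl
  rw [this, θ_single]
  simp

lemma xg_eq (m : ℕ) (i : Fin m) : xg m (i : ℕ) = ι m (X (Sum.inl i)) := by
  rw [xg, dif_pos i.isLt]

lemma θ_T (m : ℕ) (s : Lg m) (t : (Lg m)ˣ) (n : ℤ) :
    θ m s t (T n) = ((t ^ n : (Lg m)ˣ) : Lg m) := by
  have : (T n : LaurentPolynomial (Sg m)) = AddMonoidAlgebra.single n 1 := rfl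
  rw [this, θ_single]
  simp

end Stmt14

end Stmt14Aux

theorem stmt_14 (m : ℕ) (hm : 2 ≤ m) : Function.Injective (evenRestriction m hm) := by
  classical
  have hι := Stmt14.ι_inj m
  have hFne : Stmt14.Fpoly m ≠ 0 := by
    intro h
    have h2 := Stmt14.Fpoly_natDegree m hm
    rw [h, Polynomial.natDegree_zero] at h2
    omega
  have hdeg : (Stmt14.Fpoly m).degree ≠ 0 := by
    rw [Polynomial.degree_eq_natDegree hFne, Stmt14.Fpoly_natDegree m hm]
    exact_mod_cast Nat.succ_ne_zero m
  obtain ⟨s, hs⟩ := IsAlgClosed.exists_root (Stmt14.Fpoly m) hdeg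
  have hseq : s ^ 2 * (Stmt14.Dp (Stmt14.xg m) (m - 1)).eval s
      + (Stmt14.eg m ^ 2 - Stmt14.xg m (m - 1) * s) = 0 := by
    simpa [Stmt14.Fpoly, Polynomial.IsRoot] using hs
  have hs0 : s ≠ 0 := by
    intro h
    rw [h] at hseq
    simp at hseq
    exact Stmt14.eg_ne m hseq
  obtain ⟨t, ht⟩ := IsAlgClosed.exists_root (Polynomial.X ^ 2 - Polynomial.C s) (by
    rw [Polynomial.degree_X_pow_sub_C (by norm_num : 0 < 2)]
    norm_num)
  have ht2 : t ^ 2 = s := by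
    have h := ht
    simp only [Polynomial.IsRoot, Polynomial.eval_sub, Polynomial.eval_pow,
      Polynomial.eval_X, Polynomial.eval_C] at h
    exact sub_eq_zero.mp h
  have ht0 : t ≠ 0 := by
    intro h
    apply hs0
    rw [← ht2, h]; ring
  set tu : (Stmt14.Lg m)ˣ := Units.mk0 t ht0 with htu
  set Θ := Stmt14.θ m s tu with hΘ
  have htuv : (tu : Stmt14.Lg m) = t := rfl
  have htui : ((tu⁻¹ : (Stmt14.Lg m)ˣ) : Stmt14.Lg m) = t⁻¹ := by
    rw [htu]; simp
  have key : ∀ v, Θ (evenRestriction m hm (MvPolynomial.X v)) = Stmt14.ι m (MvPolynomial.X v) := by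
    intro v
    rcases v with i | u
    · rw [← Stmt14.xg_eq m i]
      simp only [evenRestriction, MvPolynomial.aeval_X]
      by_cases hi : (i : ℕ) = m - 1
      · rw [dif_pos hi]
        rw [map_add, map_mul, Stmt14.θ_T, map_pow, Stmt14.θ_C, Stmt14.θ_C]
        simp only [Stmt14.gS, MvPolynomial.aeval_X]
        have h2z : ((tu ^ (2:ℤ) : (Stmt14.Lg m)ˣ) : Stmt14.Lg m) = s := by
          rw [show (2:ℤ) = ((2:ℕ):ℤ) from rfl, zpow_natCast, Units.val_pow_eq_pow_val,
            htuv, ht2]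
        rw [h2z, htui, hi]
        have h21 : m - 2 + 1 = m - 1 := by omega
        rw [h21, mul_pow, inv_pow, ht2]
        field_simp
        linear_combination hseq
      · rw [dif_neg hi]
        by_cases h0 : (i : ℕ) = 0
        · rw [dif_pos h0]
          rw [map_add, map_mul, Stmt14.θ_T, map_one, Stmt14.θ_C]
          simp only [Stmt14.gS, MvPolynomial.aeval_X]
          have h2z : ((tu ^ (2:ℤ) : (Stmt14.Lg m)ˣ) : Stmt14.Lg m) = s := by
            rw [show (2:ℤ) = ((2:ℕ):ℤ) from rfl, zpow_natCast, Units.val_pow_eq_pow_val,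
              htuv, ht2]
          rw [h2z, h0, Stmt14.Dp_eval_succ]
          simp [Stmt14.Dp]
        · rw [dif_neg h0]
          rw [map_add, map_mul, Stmt14.θ_T, Stmt14.θ_C, Stmt14.θ_C]
          simp only [Stmt14.gS, MvPolynomial.aeval_X]
          have h2z : ((tu ^ (2:ℤ) : (Stmt14.Lg m)ˣ) : Stmt14.Lg m) = s := by
            rw [show (2:ℤ) = ((2:ℕ):ℤ) from rfl, zpow_natCast, Units.val_pow_eq_pow_val,
              htuv, ht2]
          have h11 : (i : ℕ) - 1 + 1 = (i : ℕ) := by omega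
          rw [h2z, h11, Stmt14.Dp_eval_succ]
          ring
    · obtain rfl : u = () := rfl
      simp only [evenRestriction, MvPolynomial.aeval_X]
      rw [map_mul, Stmt14.θ_T, Stmt14.θ_C]
      simp only [Stmt14.gS, MvPolynomial.aeval_X]
      have h1z : ((tu ^ (1:ℤ) : (Stmt14.Lg m)ˣ) : Stmt14.Lg m) = t := by
        rw [zpow_one, htuv]
      rw [h1z, htui]
      show t * (Stmt14.eg m * t⁻¹) = Stmt14.ι m (X (Sum.inr ()))
      rw [Stmt14.eg]
      field_simp
  intro a b hab
  apply hι
  have hcomp : Θ.comp (evenRestriction m hm) = Stmt14.ι m :=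
    MvPolynomial.algHom_ext (fun v => by simpa using key v)
  have h1 : Θ (evenRestriction m hm a) = Stmt14.ι m a := by
    rw [← hcomp, AlgHom.comp_apply]
  have h2 : Θ (evenRestriction m hm b) = Stmt14.ι m b := by
    rw [← hcomp, AlgHom.comp_apply]
  rw [← h1, ← h2, hab]
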